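/- For any n×n matrix A = (a_{i,j}) with nonnegative real entries, the permanent equals the expectation of the squared determinant over independent uniform signs: perm(A) = 2^{−n²} · Σ_{ε ∈ {±1}^{n×n}} det(B_ε)², where (B_ε)_{i,j} = ε_{i,j}·√(a_{i,j}). -/

import Mathlib

open Finset

/-- The permanent of an `n × n` real matrix. -/
noncomputable def perma {n : ℕ} (A : Matrix (Fin n) (Fin n) ℝ) : ℝ :=
  ∑ σ : Equiv.Perm (Fin n), ∏ i, A i (σ i)

private def sgn (b : Bool) : ℝ := if b then 1 else -1

private lemma sgn_mul_self (b : Bool) : sgn b * sgn b = 1 := by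
  cases b <;> simp [sgn]

private lemma sgn_not (b : Bool) : sgn (!b) = - sgn b := by
  cases b <;> simp [sgn]

private lemma key {n : ℕ} (σ τ : Equiv.Perm (Fin n)) :
    ∑ ε : Fin n → Fin n → Bool, ∏ i, sgn (ε (σ i) i) * sgn (ε (τ i) i)
      = if σ = τ then (2 : ℝ) ^ (n ^ 2) else 0 := by
  by_cases h : σ = τ
  · subst h
    rw [if_pos rfl]
    have h1 : ∀ ε : Fin n → Fin n → Bool,
        (∏ i, sgn (ε (σ i) i) * sgn (ε (σ i) i)) = 1 := fun ε =>
      Finset.prod_eq_one fun i _ => sgn_mul_self _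
    simp only [h1, Finset.sum_const, Finset.card_univ, nsmul_eq_mul, mul_one]
    simp [pow_two, pow_mul]
  · rw [if_neg h]
    have : ∃ i₀, σ i₀ ≠ τ i₀ := by
      by_contra hc
      push_neg at hc
      exact h (Equiv.ext hc)
    obtain ⟨i₀, hi₀⟩ := this
    set flip : (Fin n → Fin n → Bool) → (Fin n → Fin n → Bool) :=
      fun ε a b => if a = σ i₀ ∧ b = i₀ then !(ε a b) else ε a b with hflip
    have hinv : Function.Involutive flip := by
      intro ε
      funext a b
      by_cases hab : a = σ i₀ ∧ b = i₀ <;> simp [hflip, hab]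
    have hneg : ∀ ε, (∏ i, sgn ((flip ε) (σ i) i) * sgn ((flip ε) (τ i) i))
        = - ∏ i, sgn (ε (σ i) i) * sgn (ε (τ i) i) := by
      intro ε
      rw [← Finset.mul_prod_erase Finset.univ
          (fun i => sgn ((flip ε) (σ i) i) * sgn ((flip ε) (τ i) i)) (Finset.mem_univ i₀),
        ← Finset.mul_prod_erase Finset.univ
          (fun i => sgn (ε (σ i) i) * sgn (ε (τ i) i)) (Finset.mem_univ i₀)]
      have h1 : flip ε (σ i₀) i₀ = !(ε (σ i₀) i₀) := by simp [hflip]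
      have h2 : flip ε (τ i₀) i₀ = ε (τ i₀) i₀ := by
        have hne : ¬ τ i₀ = σ i₀ := fun hh => hi₀ hh.symm
        simp [hflip, hne]
      have h3 : (∏ i ∈ Finset.univ.erase i₀,
            sgn ((flip ε) (σ i) i) * sgn ((flip ε) (τ i) i))
          = ∏ i ∈ Finset.univ.erase i₀, sgn (ε (σ i) i) * sgn (ε (τ i) i) := by
        refine Finset.prod_congr rfl fun i hi => ?_
        have hne : i ≠ i₀ := Finset.ne_of_mem_erase hi
        simp [hflip, hne]
      rw [h1, h2, h3, sgn_not]
      ring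
    have hsum : (∑ ε : Fin n → Fin n → Bool, ∏ i, sgn (ε (σ i) i) * sgn (ε (τ i) i))
        = ∑ ε : Fin n → Fin n → Bool, ∏ i, sgn ((flip ε) (σ i) i) * sgn ((flip ε) (τ i) i) :=
      (Fintype.sum_bijective flip hinv.bijective _ _ fun ε => rfl).symm
    have := hsum
    simp only [hneg, Finset.sum_neg_distrib] at this
    linarith

theorem permanent_as_expected_squared_determinant {n : ℕ}
    (A : Matrix (Fin n) (Fin n) ℝ) (hA : ∀ i j, 0 ≤ A i j) :
    perma A
      = (2 : ℝ) ^ (-(n ^ 2 : ℤ)) *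
          ∑ ε : Fin n → Fin n → Bool,
            (Matrix.det (fun i j => (if ε i j then (1 : ℝ) else -1) * Real.sqrt (A i j))) ^ 2 := by
  have hdet : ∀ ε : Fin n → Fin n → Bool,
      Matrix.det (fun i j => (if ε i j then (1 : ℝ) else -1) * Real.sqrt (A i j))
        = ∑ σ : Equiv.Perm (Fin n),
            (Equiv.Perm.sign σ : ℤ) * ∏ i, sgn (ε (σ i) i) * Real.sqrt (A (σ i) i) := by
    intro ε
    refine (Matrix.det_apply' _).trans ?_
    rfl
  have hsq : ∀ ε : Fin n → Fin n → Bool,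
      (Matrix.det (fun i j => (if ε i j then (1 : ℝ) else -1) * Real.sqrt (A i j))) ^ 2
        = ∑ σ : Equiv.Perm (Fin n), ∑ τ : Equiv.Perm (Fin n),
            ((Equiv.Perm.sign σ : ℤ) * (Equiv.Perm.sign τ : ℤ)
              * ((∏ i, Real.sqrt (A (σ i) i)) * ∏ i, Real.sqrt (A (τ i) i)))
              * ∏ i, sgn (ε (σ i) i) * sgn (ε (τ i) i) := by
    intro ε
    rw [hdet, sq, Finset.sum_mul_sum]
    refine Finset.sum_congr rfl fun σ _ => Finset.sum_congr rfl fun τ _ => ?_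
    simp only [Finset.prod_mul_distrib]
    ring
  rw [Finset.sum_congr rfl fun ε _ => hsq ε, Finset.sum_comm]
  have hin : ∀ σ : Equiv.Perm (Fin n),
      (∑ ε : Fin n → Fin n → Bool, ∑ τ : Equiv.Perm (Fin n),
          ((Equiv.Perm.sign σ : ℤ) * (Equiv.Perm.sign τ : ℤ)
            * ((∏ i, Real.sqrt (A (σ i) i)) * ∏ i, Real.sqrt (A (τ i) i)))
            * ∏ i, sgn (ε (σ i) i) * sgn (ε (τ i) i))
        = (2 : ℝ) ^ (n ^ 2) * ∏ i, A (σ i) i := by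
    intro σ
    rw [Finset.sum_comm]
    have hterm : ∀ τ : Equiv.Perm (Fin n),
        (∑ ε : Fin n → Fin n → Bool,
            ((Equiv.Perm.sign σ : ℤ) * (Equiv.Perm.sign τ : ℤ)
              * ((∏ i, Real.sqrt (A (σ i) i)) * ∏ i, Real.sqrt (A (τ i) i)))
              * ∏ i, sgn (ε (σ i) i) * sgn (ε (τ i) i))
          = if σ = τ then
              ((Equiv.Perm.sign σ : ℤ) * (Equiv.Perm.sign τ : ℤ)
                * ((∏ i, Real.sqrt (A (σ i) i)) * ∏ i, Real.sqrt (A (τ i) i)))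
                * (2 : ℝ) ^ (n ^ 2)
            else 0 := by
      intro τ
      rw [← Finset.mul_sum, key]
      by_cases h : σ = τ <;> simp [h]
    rw [Finset.sum_congr rfl fun τ _ => hterm τ, Finset.sum_ite_eq, if_pos (Finset.mem_univ σ)]
    have hsign : ((Equiv.Perm.sign σ : ℤ) : ℝ) * ((Equiv.Perm.sign σ : ℤ) : ℝ) = 1 := by
      rcases Int.units_eq_one_or (Equiv.Perm.sign σ) with h | h <;> rw [h] <;> norm_num
    have hsqrt : (∏ i, Real.sqrt (A (σ i) i)) * (∏ i, Real.sqrt (A (σ i) i))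
        = ∏ i, A (σ i) i := by
      rw [← Finset.prod_mul_distrib]
      exact Finset.prod_congr rfl fun i _ => Real.mul_self_sqrt (hA _ _)
    rw [mul_comm (((Equiv.Perm.sign σ : ℤ) : ℝ) * _ * _) ((2:ℝ) ^ (n ^ 2))]
    rw [mul_assoc ((Equiv.Perm.sign σ : ℤ) : ℝ), ← mul_assoc, mul_assoc]
    rw [show ((Equiv.Perm.sign σ : ℤ) : ℝ) * (((Equiv.Perm.sign σ : ℤ) : ℝ)
      * ((∏ i, Real.sqrt (A (σ i) i)) * ∏ i, Real.sqrt (A (σ i) i)))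
      = ∏ i, A (σ i) i by rw [← mul_assoc, hsign, one_mul, hsqrt]]
  rw [Finset.sum_congr rfl fun σ _ => hin σ, ← Finset.mul_sum, ← mul_assoc]
  have h2 : (2 : ℝ) ^ (-(n ^ 2 : ℤ)) * (2 : ℝ) ^ (n ^ 2) = 1 := by
    rw [show ((2:ℝ) ^ (n^2) : ℝ) = (2:ℝ) ^ ((n^2 : ℕ) : ℤ) by rw [zpow_natCast]]
    rw [← zpow_add₀ (by norm_num : (2:ℝ) ≠ 0)]
    norm_num
  rw [h2, one_mul, perma]
  rw [← Equiv.sum_comp (Equiv.inv (Equiv.Perm (Fin n))) (fun σ => ∏ i, A (σ i) i)]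
  refine Finset.sum_congr rfl fun σ _ => ?_
  simp only [Equiv.inv_apply]
  rw [← Equiv.prod_comp σ (fun j => A (σ⁻¹ j) j)]
  simp
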